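/- Let N ≥ 1, A ∈ ℝ^{2N×2N}, B ∈ ℝ^{2N×N}, and let P, Q be symmetric real 2N×2N matrices with AᵀP + PA = −Q. Assume there are constants 0 < λ_P ≤ Λ_P and λ_Q > 0 such that λ_P ‖x‖² ≤ ⟨x, P x⟩ ≤ Λ_P ‖x‖² and ⟨x, Q x⟩ ≥ λ_Q ‖x‖² for all x ∈ ℝ^{2N}. Let ε > 0, ρ̄ > 0, and let η, ρ : ℝ → ℝ^N × ℝ be functions with ‖η(t)‖ ≤ ρ(t) ≤ ρ̄ for all t. Let e : ℝ → ℝ^{2N} be differentiable and satisfy ė(t) = A e(t) + B(r(t) + η(t)), where w(t) = Bᵀ P e(t) and r(t) = −ρ(t) w(t)/‖w(t)‖ if ‖w(t)‖ > ε and r(t) = −ρ(t) w(t)/ε if ‖w(t)‖ ≤ ε. Then, with k = λ_Q / Λ_P, for all t ≥ 0 the Lyapunov function V(t) = ⟨e(t), P e(t)⟩ satisfies V(t) ≤ e^{−k t} V(0) + (ε ρ̄ Λ_P / (2 λ_Q)) (1 − e^{−k t}); consequently ‖e(t)‖² ≤ (1/λ_P)(e^{−k t} Λ_P ‖e(0)‖²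 + ε ρ̄ Λ_P / (2 λ_Q)) for all t ≥ 0, so the tracking error is uniformly ultimately bounded with an ultimate bound √(ε ρ̄ Λ_P / (2 λ_Q λ_P)) that can be made arbitrarily small by choosing the design parameter ε sufficiently small. -/

import Mathlib

open Matrix
open scoped RealInnerProductSpace

/-- Matrix-vector multiplication viewed as a map between Euclidean spaces. -/
noncomputable def mv {m n : ℕ} (A : Matrix (Fin m) (Fin n) ℝ)
    (x : EuclideanSpace ℝ (Fin n)) : EuclideanSpace ℝ (Fin m) :=
  (EuclideanSpace.equiv (Fin m) ℝ).symm (A.mulVec ((EuclideanSpace.equiv (Fin n) ℝ) x))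

lemma mv_add {m n : ℕ} (A : Matrix (Fin m) (Fin n) ℝ) (x y : EuclideanSpace ℝ (Fin n)) :
    mv A (x + y) = mv A x + mv A y := by
  simp [mv, Matrix.mulVec_add]

lemma matadd_mv {m n : ℕ} (A B : Matrix (Fin m) (Fin n) ℝ) (x : EuclideanSpace ℝ (Fin n)) :
    mv (A + B) x = mv A x + mv B x := by
  simp [mv, Matrix.add_mulVec]

lemma mv_mv {m n p : ℕ} (A : Matrix (Fin m) (Fin n) ℝ) (B : Matrix (Fin n) (Fin p) ℝ)
    (x : EuclideanSpace ℝ (Fin p)) : mv A (mv B x) = mv (A * B) x := by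
  simp [mv, EuclideanSpace.equiv, Matrix.mulVec_mulVec]
  exact Matrix.mulVec_mulVec _ A B

lemma mv_neg' {m n : ℕ} (A : Matrix (Fin m) (Fin n) ℝ) (x : EuclideanSpace ℝ (Fin n)) :
    mv (-A) x = -(mv A x) := by
  simp [mv, Matrix.neg_mulVec]

lemma inner_mv {m n : ℕ} (M : Matrix (Fin m) (Fin n) ℝ) (x : EuclideanSpace ℝ (Fin m))
    (y : EuclideanSpace ℝ (Fin n)) : ⟪x, mv M y⟫ = ⟪mv Mᵀ x, y⟫ := by
  simp only [mv, PiLp.inner_apply, RCLike.inner_apply, conj_trivial,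
    PiLp.continuousLinearEquiv_symm_apply, EuclideanSpace.equiv,
    PiLp.continuousLinearEquiv_apply, Matrix.mulVec, dotProduct,
    Matrix.transpose_apply, Finset.mul_sum, Finset.sum_mul]
  rw [Finset.sum_comm]
  congr 1; funext i; congr 1; funext j; ring

/-- `mv` as a continuous linear map. -/
noncomputable def mvL {m n : ℕ} (A : Matrix (Fin m) (Fin n) ℝ) :
    EuclideanSpace ℝ (Fin n) →L[ℝ] EuclideanSpace ℝ (Fin m) :=
  LinearMap.toContinuousLinearMap (Matrix.toEuclideanLin A)

lemma mv_eq_mvL {m n : ℕ} (A : Matrix (Fin m) (Fin n) ℝ) : mv A = ⇑(mvL A) := rfl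


/-- deterministic core of Theorem 1: Under the robust
outer-loop control law, with `AᵀP + PA = −Q`,
`λ_P ‖x‖² ≤ ⟨x, Px⟩ ≤ Λ_P ‖x‖²`, `⟨x, Qx⟩ ≥ λ_Q ‖x‖²`,
`‖η(t)‖ ≤ ρ(t) ≤ ρ̄`, `w(t) = BᵀP e(t)`, and `r(t) = −ρ(t) w(t)/‖w(t)‖` if
`‖w(t)‖ > ε`, `r(t) = −ρ(t) w(t)/ε` otherwise, the Lyapunov function
`V(t) = ⟨e(t), P e(t)⟩` along `ė = A e + B (r + η)` satisfies, with
`k = λ_Q / Λ_P`, `V(t) ≤ e^{−kt} V(0) + (ε ρ̄ Λ_P/(2 λ_Q))(1 − e^{−kt})` and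
`‖e(t)‖² ≤ (1/λ_P)(e^{−kt} Λ_P ‖e(0)‖² + ε ρ̄ Λ_P/(2 λ_Q))` for all `t ≥ 0`:
the tracking error is uniformly ultimately bounded with ultimate bound
`√(ε ρ̄ Λ_P / (2 λ_Q λ_P))`, arbitrarily small for small `ε`. -/
theorem tracking_error_uniformly_ultimately_bounded
    (N : ℕ) (hN : 1 ≤ N)
    (A : Matrix (Fin (2 * N)) (Fin (2 * N)) ℝ)
    (B : Matrix (Fin (2 * N)) (Fin N) ℝ)
    (P Q : Matrix (Fin (2 * N)) (Fin (2 * N)) ℝ)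
    (hP : P.IsSymm) (hQ : Q.IsSymm)
    (hLyap : Aᵀ * P + P * A = -Q)
    (lamP LamP lamQ : ℝ) (hlamP : 0 < lamP) (hlamPLamP : lamP ≤ LamP)
    (hlamQ : 0 < lamQ)
    (hPlb : ∀ x : EuclideanSpace ℝ (Fin (2 * N)), lamP * ‖x‖ ^ 2 ≤ ⟪x, mv P x⟫)
    (hPub : ∀ x : EuclideanSpace ℝ (Fin (2 * N)), ⟪x, mv P x⟫ ≤ LamP * ‖x‖ ^ 2)
    (hQlb : ∀ x : EuclideanSpace ℝ (Fin (2 * N)), lamQ * ‖x‖ ^ 2 ≤ ⟪x, mv Q x⟫)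
    (ε ρbar : ℝ) (hε : 0 < ε) (hρbar : 0 < ρbar)
    (η : ℝ → EuclideanSpace ℝ (Fin N)) (ρ : ℝ → ℝ)
    (hηρ : ∀ t, ‖η t‖ ≤ ρ t) (hρ : ∀ t, ρ t ≤ ρbar)
    (e : ℝ → EuclideanSpace ℝ (Fin (2 * N)))
    (w : ℝ → EuclideanSpace ℝ (Fin N))
    (hw : ∀ t, w t = mv Bᵀ (mv P (e t)))
    (r : ℝ → EuclideanSpace ℝ (Fin N))
    (hr : ∀ t, r t =
      if ε < ‖w t‖ then (-(ρ t / ‖w t‖)) • w t else (-(ρ t / ε)) • w t)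
    (he : ∀ t, HasDerivAt e (mv A (e t) + mv B (r t + η t)) t) :
    ∀ t, 0 ≤ t →
      (⟪e t, mv P (e t)⟫ ≤
          Real.exp (-(lamQ / LamP) * t) * ⟪e 0, mv P (e 0)⟫ +
            ε * ρbar * LamP / (2 * lamQ) * (1 - Real.exp (-(lamQ / LamP) * t))) ∧
      ‖e t‖ ^ 2 ≤ (1 / lamP) *
          (Real.exp (-(lamQ / LamP) * t) * LamP * ‖e 0‖ ^ 2 +
            ε * ρbar * LamP / (2 * lamQ)) := by
  have hLamP : (0:ℝ) < LamP := lt_of_lt_of_le hlamP hlamPLamP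
  set k : ℝ := lamQ / LamP with hk_def
  have hk : 0 < k := div_pos hlamQ hLamP
  set M : ℝ := ε * ρbar * LamP / (2 * lamQ) with hM_def
  have hM : 0 < M := by positivity
  set V : ℝ → ℝ := fun t => ⟪e t, mv P (e t)⟫ with hV_def
  set V' : ℝ → ℝ := fun t => -⟪e t, mv Q (e t)⟫ + 2 * ⟪r t + η t, w t⟫ with hV'_def
  have hPsymm : Pᵀ = P := hP
  -- the key algebraic identity
  have key : ∀ (x : EuclideanSpace ℝ (Fin (2 * N))) (u : EuclideanSpace ℝ (Fin N)),
      ⟪x, mv P (mv A x + mv B u)⟫ + ⟪mv A x + mv B u, mv P x⟫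
        = -⟪x, mv Q x⟫ + 2 * ⟪u, mv Bᵀ (mv P x)⟫ := by
    intro x u
    have h1 : ⟪x, mv P (mv A x)⟫ + ⟪mv A x, mv P x⟫ = -⟪x, mv Q x⟫ := by
      have e1 : ⟪x, mv P (mv A x)⟫ = ⟪x, mv (P * A) x⟫ := by rw [mv_mv]
      have e2 : ⟪mv A x, mv P x⟫ = ⟪x, mv (Aᵀ * P) x⟫ := by
        rw [real_inner_comm, inner_mv, mv_mv, real_inner_comm]
      rw [e1, e2, ← inner_add_right, ← matadd_mv, add_comm (P * A), hLyap, mv_neg',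
        inner_neg_right]
    have h2 : ⟪x, mv P (mv B u)⟫ = ⟪u, mv Bᵀ (mv P x)⟫ := by
      rw [inner_mv, hPsymm, inner_mv, real_inner_comm]
    have h3 : ⟪mv B u, mv P x⟫ = ⟪u, mv Bᵀ (mv P x)⟫ := by
      rw [real_inner_comm, inner_mv, real_inner_comm]
    rw [mv_add, inner_add_right, inner_add_left, h2, h3]
    linarith
  -- derivative of V
  have hVderiv : ∀ t, HasDerivAt V (V' t) t := by
    intro t
    have hL : HasDerivAt (fun s => mv P (e s))
        (mv P (mv A (e t) + mv B (r t + η t))) t := by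
      have := ((mvL P).hasFDerivAt (x := e t)).comp_hasDerivAt t (he t)
      simp only [mv_eq_mvL, Function.comp_def] at this ⊢
      exact this
    have h := (he t).inner ℝ hL
    have heq : V' t = ⟪e t, mv P (mv A (e t) + mv B (r t + η t))⟫
        + ⟪mv A (e t) + mv B (r t + η t), mv P (e t)⟫ := by
      rw [key (e t) (r t + η t), ← hw t]
    rw [heq]
    exact h
  -- pointwise bound on V'
  have hbound : ∀ t, V' t ≤ -k * V t + k * M := by
    intro t
    have hρt : 0 ≤ ρ t := le_trans (norm_nonneg _) (hηρ t)
    have hinη : ⟪η t, w t⟫ ≤ ρ t * ‖w t‖ :=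
      le_trans (real_inner_le_norm _ _)
        (mul_le_mul_of_nonneg_right (hηρ t) (norm_nonneg _))
    have hww : ⟪w t, w t⟫ = ‖w t‖ ^ 2 := real_inner_self_eq_norm_sq (w t)
    have hsum : ⟪r t + η t, w t⟫ ≤ ε * ρbar / 4 := by
      rw [inner_add_left]
      rcases lt_or_ge ε ‖w t‖ with h | h
      · have hw0 : ‖w t‖ ≠ 0 := ne_of_gt (lt_trans hε h)
        have hrw : ⟪r t, w t⟫ = -(ρ t * ‖w t‖) := by
          rw [hr t, if_pos h, inner_smul_left, hww]
          simp only [map_neg, conj_trivial]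
          field_simp
        nlinarith
      · have hrw : ⟪r t, w t⟫ = -(ρ t / ε * ‖w t‖ ^ 2) := by
          rw [hr t, if_neg (not_lt.mpr h), inner_smul_left, hww]
          simp only [map_neg, conj_trivial]
          ring
        rw [hrw]
        have hc : ρ t / ε * ‖w t‖ ^ 2 * ε = ρ t * ‖w t‖ ^ 2 := by
          field_simp
        have hkey : ρ t * ‖w t‖ * ε - ρ t * ‖w t‖ ^ 2 ≤ ε * (ε * ρbar / 4) := by
          nlinarith [mul_nonneg hρt (sq_nonneg (2 * ‖w t‖ - ε)),
            mul_nonneg (sub_nonneg.mpr (hρ t)) (sq_nonneg ε)]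
        have hfin : (-(ρ t / ε * ‖w t‖ ^ 2) + ⟪η t, w t⟫) * ε ≤ (ε * ρbar / 4) * ε := by
          nlinarith
        exact le_of_mul_le_mul_right hfin hε
    -- combine
    have hQ1 : lamQ * ‖e t‖ ^ 2 ≤ ⟪e t, mv Q (e t)⟫ := hQlb (e t)
    have hP1 : ⟪e t, mv P (e t)⟫ ≤ LamP * ‖e t‖ ^ 2 := hPub (e t)
    have hkLam : k * LamP = lamQ := by
      rw [hk_def]; field_simp
    have hkM : k * M = ε * ρbar / 2 := by
      rw [hk_def, hM_def]; field_simp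
    have hkV : k * V t ≤ lamQ * ‖e t‖ ^ 2 := by
      calc k * V t ≤ k * (LamP * ‖e t‖ ^ 2) := by
            exact mul_le_mul_of_nonneg_left hP1 hk.le
        _ = lamQ * ‖e t‖ ^ 2 := by rw [← mul_assoc, hkLam]
    have : V' t = -⟪e t, mv Q (e t)⟫ + 2 * ⟪r t + η t, w t⟫ := rfl
    rw [this]
    linarith
  -- Gronwall via the auxiliary function g
  set g : ℝ → ℝ := fun t => Real.exp (k * t) * (V t - M) with hg_def
  set g' : ℝ → ℝ := fun t => Real.exp (k * t) * V' t + k * Real.exp (k * t) * (V t - M)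
    with hg'_def
  have hgderiv : ∀ t, HasDerivAt g (g' t) t := by
    intro t
    have h1 : HasDerivAt (fun s => Real.exp (k * s)) (k * Real.exp (k * t)) t := by
      have h0 : HasDerivAt (fun s : ℝ => k * s) k t := by
        simpa using (hasDerivAt_id t).const_mul k
      have := (Real.hasDerivAt_exp (k * t)).comp t h0
      simpa [Function.comp_def, mul_comm] using this
    have h2 := (hVderiv t).sub_const M
    have := h1.mul h2
    refine this.congr_deriv ?_
    ring
  have hg'le : ∀ t, g' t ≤ 0 := by
    intro t
    have hb := hbound t
    have hexp := (Real.exp_pos (k * t)).le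
    have := mul_le_mul_of_nonneg_left hb hexp
    simp only [hg'_def]
    nlinarith
  have hganti : Antitone g := antitone_of_hasDerivAt_nonpos hgderiv hg'le
  intro t ht
  have hgle : Real.exp (k * t) * (V t - M) ≤ V 0 - M := by
    have := hganti ht
    simpa [hg_def] using this
  have hexp1 : Real.exp (-(k * t)) * Real.exp (k * t) = 1 := by
    rw [← Real.exp_add]; simp
  have hexpneg := (Real.exp_pos (-(k * t))).le
  have hVt : V t ≤ Real.exp (-(k * t)) * V 0 + M * (1 - Real.exp (-(k * t))) := by
    have h2 := mul_le_mul_of_nonneg_left hgle hexpneg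
    rw [← mul_assoc, hexp1, one_mul] at h2
    have hre : Real.exp (-(k * t)) * V 0 + M * (1 - Real.exp (-(k * t)))
        = Real.exp (-(k * t)) * (V 0 - M) + M := by ring
    rw [hre]
    linarith
  have hkt : -(lamQ / LamP) * t = -(k * t) := by rw [hk_def]; ring
  constructor
  · have : V t = ⟪e t, mv P (e t)⟫ := rfl
    rw [← this, hkt]
    have : V 0 = ⟪e 0, mv P (e 0)⟫ := rfl
    rw [← this]
    linarith [hVt]
  · have hlb := hPlb (e t)
    have hub0 := hPub (e 0)
    have h1 : lamP * ‖e t‖ ^ 2 ≤ Real.exp (-(k * t)) * LamP * ‖e 0‖ ^ 2 + M := by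
      have h3 : Real.exp (-(k * t)) * V 0 ≤ Real.exp (-(k * t)) * (LamP * ‖e 0‖ ^ 2) :=
        mul_le_mul_of_nonneg_left hub0 hexpneg
      nlinarith [mul_nonneg hM.le hexpneg]
    rw [hkt, one_div, inv_mul_eq_div, le_div_iff₀ hlamP]
    linarith
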